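/- Let L_tr, L_1, …, L_n, L_ref : ℝ^M → ℝ with L_tr, L_1, …, L_n twice continuously differentiable and L_ref differentiable, and let θ* : ℝ^n → ℝ^M be a differentiable map satisfying ∇L_tr(θ*(β)) + Σ_{i=1}^n β_i ∇L_i(θ*(β)) = 0 for all β in a neighborhood of 0 ∈ ℝ^n. Define Q(β) := L_ref(θ*(β)). If the Hessian ∇²L_tr(θ*(0)) is invertible, then for each j ∈ {1, …, n}, ∂Q/∂β_j evaluated at β = (0, …, 0) equals − (∇L_ref(θ*(0)))ᵀ · (∇²L_tr(θ*(0)))^{-1} · ∇L_j(θ*(0)). -/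

import Mathlib

open scoped RealInnerProductSpace

/-- **Influence function formula (Eq. (5) of IDEAL).** With `Q(β) = L_ref(θ*(β))`
and stationarity `∇L_tr(θ*(β)) + ∑ i, β i • ∇L_i(θ*(β)) = 0` near `β = 0`, if the
Hessian `∇²L_tr(θ*(0))` is invertible then
`∂Q/∂β_j (0) = - ⟪∇L_ref(θ*(0)), (∇²L_tr(θ*(0)))⁻¹ ∇L_j(θ*(0))⟫`. -/
theorem ideal_influence_formula {M n : ℕ}
    (Ltr Lref : EuclideanSpace ℝ (Fin M) → ℝ)
    (L : Fin n → EuclideanSpace ℝ (Fin M) → ℝ)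
    (θstar : (Fin n → ℝ) → EuclideanSpace ℝ (Fin M))
    (hLtr : ContDiff ℝ 2 Ltr) (hL : ∀ i, ContDiff ℝ 2 (L i))
    (hLref : Differentiable ℝ Lref)
    (hθ : Differentiable ℝ θstar)
    (U : Set (Fin n → ℝ)) (hU : U ∈ nhds (0 : Fin n → ℝ))
    (hstat : ∀ β ∈ U,
      gradient Ltr (θstar β) + ∑ i, β i • gradient (L i) (θstar β) = 0)
    (H : EuclideanSpace ℝ (Fin M) ≃L[ℝ] EuclideanSpace ℝ (Fin M))
    (hH : (H : EuclideanSpace ℝ (Fin M) →L[ℝ] EuclideanSpace ℝ (Fin M)) =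
      fderiv ℝ (gradient Ltr) (θstar 0))
    (j : Fin n) :
    fderiv ℝ (fun β => Lref (θstar β)) 0 (Pi.single j 1) =
      - ⟪gradient Lref (θstar 0), H.symm (gradient (L j) (θstar 0))⟫ := by
  classical
  set x0 : EuclideanSpace ℝ (Fin M) := θstar 0 with hx0
  set Dθ : (Fin n → ℝ) →L[ℝ] EuclideanSpace ℝ (Fin M) := fderiv ℝ θstar 0 with hDθ
  -- gradients of C² functions are differentiable
  have hgrad_diff : ∀ (f : EuclideanSpace ℝ (Fin M) → ℝ), ContDiff ℝ 2 f → Differentiable ℝ (gradient f) := by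
    intro f hf
    have h1 : Differentiable ℝ (fderiv ℝ f) :=
      (hf.fderiv_right (m := 1) (by norm_num)).differentiable one_ne_zero
    exact fun x => ((InnerProductSpace.toDual ℝ (EuclideanSpace ℝ (Fin M))).symm.toContinuousLinearEquiv
      |>.differentiable.comp h1) x
  have hgtr : Differentiable ℝ (gradient Ltr) := hgrad_diff Ltr hLtr
  have hgL : ∀ i, Differentiable ℝ (gradient (L i)) := fun i => hgrad_diff (L i) (hL i)
  -- derivative of β ↦ ∇Ltr(θ*(β)) at 0
  have hcomp1 : HasFDerivAt (fun β => gradient Ltr (θstar β))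
      ((H : EuclideanSpace ℝ (Fin M) →L[ℝ] EuclideanSpace ℝ (Fin M)).comp Dθ) 0 := by
    rw [hH]
    exact ((hgtr x0).hasFDerivAt).comp 0 (hθ 0).hasFDerivAt
  -- derivative of each term β ↦ β i • ∇L_i(θ*(β)) at 0
  have hterm : ∀ i : Fin n, HasFDerivAt (fun β : Fin n → ℝ => β i • gradient (L i) (θstar β))
      ((0 : ℝ) • ((fderiv ℝ (gradient (L i)) x0).comp Dθ) +
        (ContinuousLinearMap.proj i : (Fin n → ℝ) →L[ℝ] ℝ).smulRight
          (gradient (L i) x0)) 0 := by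
    intro i
    have hc : HasFDerivAt (fun β : Fin n → ℝ => β i)
        (ContinuousLinearMap.proj i : (Fin n → ℝ) →L[ℝ] ℝ) 0 :=
      (ContinuousLinearMap.proj i : (Fin n → ℝ) →L[ℝ] ℝ).hasFDerivAt
    have hf : HasFDerivAt (fun β => gradient (L i) (θstar β))
        ((fderiv ℝ (gradient (L i)) x0).comp Dθ) 0 :=
      ((hgL i x0).hasFDerivAt).comp 0 (hθ 0).hasFDerivAt
    refine (hc.smul hf).congr_fderiv ?_
    simp [hx0]
  -- derivative of F at 0
  set F : (Fin n → ℝ) → EuclideanSpace ℝ (Fin M) := fun β => gradient Ltr (θstar β) +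
      ∑ i, β i • gradient (L i) (θstar β) with hF
  have hFderiv : HasFDerivAt F
      ((H : EuclideanSpace ℝ (Fin M) →L[ℝ] EuclideanSpace ℝ (Fin M)).comp Dθ +
        ∑ i, ((0 : ℝ) • ((fderiv ℝ (gradient (L i)) x0).comp Dθ) +
          (ContinuousLinearMap.proj i : (Fin n → ℝ) →L[ℝ] ℝ).smulRight
            (gradient (L i) x0))) 0 := by
    exact hcomp1.add (HasFDerivAt.fun_sum (fun i _ => hterm i))
  -- F vanishes near 0, so its derivative is 0
  have hF0 : fderiv ℝ F 0 = 0 := by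
    have hev : F =ᶠ[nhds (0 : Fin n → ℝ)] (fun _ => (0 : EuclideanSpace ℝ (Fin M))) :=
      Filter.eventually_of_mem hU (fun β hβ => hstat β hβ)
    rw [hev.fderiv_eq]
    exact fderiv_const_apply 0
  have hFeq := hFderiv.fderiv
  rw [hF0] at hFeq
  -- evaluate at Pi.single j 1
  have hkey : (H : EuclideanSpace ℝ (Fin M) →L[ℝ] EuclideanSpace ℝ (Fin M)) (Dθ (Pi.single j 1)) + gradient (L j) x0 = 0 := by
    have := congrArg (fun (T : (Fin n → ℝ) →L[ℝ] EuclideanSpace ℝ (Fin M)) => T (Pi.single j 1)) hFeq.symm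
    simp only [ContinuousLinearMap.add_apply, ContinuousLinearMap.coe_comp',
      Function.comp_apply, ContinuousLinearMap.sum_apply, ContinuousLinearMap.smul_apply,
      ContinuousLinearMap.smulRight_apply, ContinuousLinearMap.proj_apply,
      ContinuousLinearMap.zero_apply, zero_smul, zero_add, Pi.single_apply] at this
    simpa [Finset.sum_ite_eq', ite_smul] using this
  have hDθv : Dθ (Pi.single j 1) = - H.symm (gradient (L j) x0) := by
    have h1 : (H : EuclideanSpace ℝ (Fin M) →L[ℝ] EuclideanSpace ℝ (Fin M)) (Dθ (Pi.single j 1)) = - gradient (L j) x0 := by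
      linear_combination (norm := module) hkey
    have := congrArg H.symm h1
    simpa using this
  -- now compute the LHS
  have hQ : HasFDerivAt (fun β => Lref (θstar β))
      ((fderiv ℝ Lref x0).comp Dθ) 0 :=
    ((hLref x0).hasFDerivAt).comp 0 (hθ 0).hasFDerivAt
  rw [hQ.fderiv]
  have hinner : ∀ u : EuclideanSpace ℝ (Fin M), fderiv ℝ Lref x0 u = ⟪gradient Lref x0, u⟫ := by
    intro u
    have : fderiv ℝ Lref x0 = InnerProductSpace.toDual ℝ (EuclideanSpace ℝ (Fin M)) (gradient Lref x0) := by
      simp [gradient]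
    rw [this, InnerProductSpace.toDual_apply_apply]
  simp only [ContinuousLinearMap.coe_comp', Function.comp_apply, hDθv, hinner]
  simp [inner_neg_right]
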